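/- Proposition A.3 (the relaxation (R) is sharp when the constant state or a Dirac mass is the global minimizer): let W : 𝕋^d → ℝ be continuous with W(−x) = W(x). (a) If W(x) = Σ_{k∈ℤ^d} a_k cos(2π k·x) with a_k = a_{−k} ≥ 0 for all k ≠ 0, a_0 = 0, and Σ_k a_k < ∞, then every measure F in the relaxed cone C satisfies (1/2)∫ W dF ≥ 0 = E(Haar); hence the infimum of (1/2)∫ W dF over C equals the minimum energy and is attained at F = Haar. (b) If W(0) ≤ W(x) for all x ∈ 𝕋^d, then every F ∈ C satisfies (1/2)∫ W dF ≥ (1/2)W(0) = E(δ_0); hence the infimum over C equals the minimum energy and is attained at F = δ_0. -/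

import Mathlib

open MeasureTheory Real
open scoped ENNReal

theorem cos2pi_periodic : Function.Periodic (fun t : ℝ => Real.cos (2 * Real.pi * t)) 1 := by
  intro x; simp [mul_add, Real.cos_add_two_pi]

theorem sin2pi_periodic : Function.Periodic (fun t : ℝ => Real.sin (2 * Real.pi * t)) 1 := by
  intro x; simp [mul_add, Real.sin_add_two_pi]

/-- The function `x ↦ cos (2π x)` on the circle `ℝ/ℤ`. -/
noncomputable def cosA : AddCircle (1 : ℝ) → ℝ := cos2pi_periodic.lift

/-- The function `x ↦ sin (2π x)` on the circle `ℝ/ℤ`. -/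
noncomputable def sinA : AddCircle (1 : ℝ) → ℝ := sin2pi_periodic.lift

/-- The `d`-dimensional torus `𝕋^d = ℝ^d/ℤ^d`, with its Haar probability measure `volume`. -/
abbrev Torus (d : ℕ) := Fin d → AddCircle (1 : ℝ)

/-- `cos (2π k·x)` for `k ∈ ℤ^d` and `x ∈ 𝕋^d`. -/
noncomputable def tcos {d : ℕ} (k : Fin d → ℤ) (x : Torus d) : ℝ := cosA (∑ i, k i • x i)

/-- `sin (2π k·x)` for `k ∈ ℤ^d` and `x ∈ 𝕋^d`. -/
noncomputable def tsin {d : ℕ} (k : Fin d → ℤ) (x : Torus d) : ℝ := sinA (∑ i, k i • x i)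

/-- The autocorrelation of a measure `ρ` on `𝕋^d`: the pushforward of `ρ × ρ`
under `(x, y) ↦ x - y`. -/
noncomputable def autocorr {d : ℕ} (ρ : Measure (Torus d)) : Measure (Torus d) :=
  (ρ.prod ρ).map (fun p => p.1 - p.2)

/-- The relaxed cone `C`: nonnegative measures on `𝕋^d` of total mass one with vanishing
sine coefficients and nonnegative cosine coefficients for all `k ≠ 0`. -/
def inCone {d : ℕ} (F : Measure (Torus d)) : Prop :=
  F Set.univ = 1 ∧ ∀ k : Fin d → ℤ, k ≠ 0 →
    (∫ x, tsin k x ∂F) = 0 ∧ 0 ≤ ∫ x, tcos k x ∂F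

/-- The pairwise interaction energy `E(ρ) = (1/2) ∫∫ W(x - y) dρ(x) dρ(y)`. -/
noncomputable def energy {d : ℕ} (W : Torus d → ℝ) (ρ : Measure (Torus d)) : ℝ :=
  (1/2) * ∫ x, ∫ y, W (x - y) ∂ρ ∂ρ

-- basics
lemma cosA_coe (t : ℝ) : cosA (t : AddCircle (1:ℝ)) = Real.cos (2 * π * t) :=
  cos2pi_periodic.lift_coe t
lemma sinA_coe (t : ℝ) : sinA (t : AddCircle (1:ℝ)) = Real.sin (2 * π * t) :=
  sin2pi_periodic.lift_coe t

lemma cosA_eq_re (u : AddCircle (1:ℝ)) : cosA u = (AddCircle.toCircle u : ℂ).re := by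
  induction u using QuotientAddGroup.induction_on with
  | H t =>
    rw [cosA_coe, AddCircle.toCircle_apply_mk, Circle.coe_exp]
    rw [show ((2 * π / 1 * t : ℝ) : ℂ) * Complex.I = ((2 * π * t :ℝ) : ℂ) * Complex.I by
      push_cast; ring]
    rw [Complex.exp_ofReal_mul_I_re]

lemma sinA_eq_im (u : AddCircle (1:ℝ)) : sinA u = (AddCircle.toCircle u : ℂ).im := by
  induction u using QuotientAddGroup.induction_on with
  | H t =>
    rw [sinA_coe, AddCircle.toCircle_apply_mk, Circle.coe_exp]
    rw [show ((2 * π / 1 * t : ℝ) : ℂ) * Complex.I = ((2 * π * t :ℝ) : ℂ) * Complex.I by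
      push_cast; ring]
    rw [Complex.exp_ofReal_mul_I_im]

lemma continuous_cosA : Continuous cosA := by
  rw [continuous_coinduced_dom (f := (QuotientAddGroup.mk : ℝ → AddCircle (1:ℝ)))]
  exact (Real.continuous_cos.comp (continuous_const.mul continuous_id))

lemma continuous_sinA : Continuous sinA := by
  rw [continuous_coinduced_dom (f := (QuotientAddGroup.mk : ℝ → AddCircle (1:ℝ)))]
  exact (Real.continuous_sin.comp (continuous_const.mul continuous_id))

lemma continuous_tcos {d : ℕ} (k : Fin d → ℤ) : Continuous (tcos k) := by
  apply continuous_cosA.comp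
  exact continuous_finset_sum _ (fun i _ => (continuous_zsmul (k i)).comp (continuous_apply i))

lemma continuous_tsin {d : ℕ} (k : Fin d → ℤ) : Continuous (tsin k) := by
  apply continuous_sinA.comp
  exact continuous_finset_sum _ (fun i _ => (continuous_zsmul (k i)).comp (continuous_apply i))

lemma abs_cosA_le (u : AddCircle (1:ℝ)) : |cosA u| ≤ 1 := by
  induction u using QuotientAddGroup.induction_on with
  | H t => rw [cosA_coe]; exact Real.abs_cos_le_one _

lemma abs_tcos_le {d : ℕ} (k : Fin d → ℤ) (x : Torus d) : |tcos k x| ≤ 1 := abs_cosA_le _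

lemma cosA_zero : cosA 0 = 1 := by
  rw [show (0 : AddCircle (1:ℝ)) = ((0:ℝ) : AddCircle (1:ℝ)) by norm_cast, cosA_coe]; simp

lemma sinA_zero : sinA 0 = 0 := by
  rw [show (0 : AddCircle (1:ℝ)) = ((0:ℝ) : AddCircle (1:ℝ)) by norm_cast, sinA_coe]; simp

lemma tcos_zero_right {d : ℕ} (k : Fin d → ℤ) : tcos k 0 = 1 := by
  simp [tcos, cosA_zero]

lemma tsin_zero_right {d : ℕ} (k : Fin d → ℤ) : tsin k 0 = 0 := by
  simp [tsin, sinA_zero]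

lemma tcos_zero_left {d : ℕ} (x : Torus d) : tcos 0 x = 1 := by
  simp [tcos, cosA_zero]

lemma cosA_sub (u v : AddCircle (1:ℝ)) :
    cosA (u - v) = cosA u * cosA v + sinA u * sinA v := by
  induction u using QuotientAddGroup.induction_on with
  | H s =>
    induction v using QuotientAddGroup.induction_on with
    | H t =>
      rw [← QuotientAddGroup.mk_sub, cosA_coe, cosA_coe, cosA_coe, sinA_coe, sinA_coe,
        mul_sub, Real.cos_sub]

lemma sinA_sub (u v : AddCircle (1:ℝ)) :
    sinA (u - v) = sinA u * cosA v - cosA u * sinA v := by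
  induction u using QuotientAddGroup.induction_on with
  | H s =>
    induction v using QuotientAddGroup.induction_on with
    | H t =>
      rw [← QuotientAddGroup.mk_sub, sinA_coe, cosA_coe, cosA_coe, sinA_coe, sinA_coe,
        mul_sub, Real.sin_sub]

lemma sum_sub_apply {d : ℕ} (k : Fin d → ℤ) (x y : Torus d) :
    (∑ i, k i • (x - y) i) = (∑ i, k i • x i) - (∑ i, k i • y i) := by
  rw [← Finset.sum_sub_distrib]
  exact Finset.sum_congr rfl fun i _ => by simp [smul_sub]

lemma tcos_sub {d : ℕ} (k : Fin d → ℤ) (x y : Torus d) :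
    tcos k (x - y) = tcos k x * tcos k y + tsin k x * tsin k y := by
  rw [tcos, sum_sub_apply, cosA_sub]; rfl

lemma tsin_sub {d : ℕ} (k : Fin d → ℤ) (x y : Torus d) :
    tsin k (x - y) = tsin k x * tcos k y - tcos k x * tsin k y := by
  rw [tsin, sum_sub_apply, sinA_sub]; rfl

lemma toCircle_sum {ι : Type*} (s : Finset ι) (f : ι → AddCircle (1:ℝ)) :
    (AddCircle.toCircle (∑ i ∈ s, f i) : ℂ) = ∏ i ∈ s, (AddCircle.toCircle (f i) : ℂ) := by
  classical
  induction s using Finset.cons_induction with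
  | empty => simpa using AddCircle.fourier_zero' (T := 1) (x := 0)
  | cons a s ha ih =>
    rw [Finset.sum_cons, Finset.prod_cons, AddCircle.toCircle_add, Circle.coe_mul, ih]

lemma tcos_eq_re {d : ℕ} (k : Fin d → ℤ) (x : Torus d) :
    tcos k x = (∏ i, (fourier (k i) (x i) : ℂ)).re := by
  rw [tcos, cosA_eq_re, toCircle_sum]
  congr 1

lemma tsin_eq_im {d : ℕ} (k : Fin d → ℤ) (x : Torus d) :
    tsin k x = (∏ i, (fourier (k i) (x i) : ℂ)).im := by
  rw [tsin, sinA_eq_im, toCircle_sum]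
  congr 1

instance : IsProbabilityMeasure (volume : Measure (AddCircle (1:ℝ))) :=
  ⟨by rw [AddCircle.measure_univ]; norm_num⟩

lemma integral_fourier_circle {n : ℤ} (hn : n ≠ 0) :
    ∫ x : AddCircle (1:ℝ), (fourier n x : ℂ) = 0 :=
  integral_eq_zero_of_add_right_eq_neg (fourier_add_half_inv_index hn one_pos)

lemma integral_prod_fourier {d : ℕ} (k : Fin d → ℤ) (hk : k ≠ 0) :
    ∫ x : Torus d, (∏ i, (fourier (k i) (x i) : ℂ)) = 0 := by
  rw [MeasureTheory.integral_fintype_prod_volume_eq_prod (f := fun i (t : AddCircle (1:ℝ)) =>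
    (fourier (k i) t : ℂ))]
  obtain ⟨i0, hi0⟩ : ∃ i, k i ≠ 0 := by
    by_contra h
    push_neg at h
    exact hk (funext h)
  exact Finset.prod_eq_zero (Finset.mem_univ i0) (integral_fourier_circle hi0)

lemma integrable_prod_fourier {d : ℕ} (k : Fin d → ℤ) :
    Integrable (fun x : Torus d => (∏ i, (fourier (k i) (x i) : ℂ))) (volume) := by
  apply Continuous.integrable_of_hasCompactSupport
  · exact continuous_finset_prod _ fun i _ => by fun_prop
  · exact HasCompactSupport.of_compactSpace _

lemma integral_tcos_volume {d : ℕ} (k : Fin d → ℤ) (hk : k ≠ 0) :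
    ∫ x : Torus d, tcos k x = 0 := by
  simp_rw [tcos_eq_re]
  rw [show (0:ℝ) = (∫ x : Torus d, (∏ i, (fourier (k i) (x i) : ℂ))).re by
    rw [integral_prod_fourier k hk]; simp]
  simpa using integral_re (integrable_prod_fourier k)

lemma integral_tsin_volume {d : ℕ} (k : Fin d → ℤ) (hk : k ≠ 0) :
    ∫ x : Torus d, tsin k x = 0 := by
  simp_rw [tsin_eq_im]
  rw [show (0:ℝ) = (∫ x : Torus d, (∏ i, (fourier (k i) (x i) : ℂ))).im by
    rw [integral_prod_fourier k hk]; simp]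
  simpa using integral_im (integrable_prod_fourier k)

section Core
variable {d : ℕ}

lemma integrable_of_cont {α : Type*} [TopologicalSpace α] [CompactSpace α] [MeasurableSpace α]
    [OpensMeasurableSpace α] [T2Space α] (f : α → ℝ) (hf : Continuous f) (μ : Measure α)
    [IsFiniteMeasure μ] : Integrable f μ :=
  hf.integrable_of_hasCompactSupport (HasCompactSupport.of_compactSpace f)

lemma integral_expansion (F : Measure (Torus d)) [IsProbabilityMeasure F]
    (a : (Fin d → ℤ) → ℝ) (hsum : Summable a) (W : Torus d → ℝ)
    (hW : ∀ x, W x = ∑' k : Fin d → ℤ, a k * tcos k x) :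
    ∫ x, W x ∂F = ∑' k : Fin d → ℤ, a k * ∫ x, tcos k x ∂F := by
  have hint : ∀ k : Fin d → ℤ, Integrable (fun x => a k * tcos k x) F := fun k =>
    (integrable_of_cont (tcos k) (continuous_tcos k) F).const_mul _
  have hbound : ∀ k : Fin d → ℤ, (∫ x, ‖a k * tcos k x‖ ∂F) ≤ |a k| := by
    intro k
    calc ∫ x, ‖a k * tcos k x‖ ∂F ≤ ∫ _x, |a k| ∂F := by
          apply integral_mono (hint k).norm (integrable_const _)
          intro x
          show ‖a k * tcos k x‖ ≤ |a k|
          rw [norm_mul]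
          calc ‖a k‖ * ‖tcos k x‖ ≤ ‖a k‖ * 1 :=
                mul_le_mul_of_nonneg_left (by simpa using abs_tcos_le k x) (norm_nonneg _)
            _ = |a k| := mul_one _
      _ = |a k| := by simp
  have hsum2 : Summable fun k : Fin d → ℤ => ∫ x, ‖a k * tcos k x‖ ∂F :=
    Summable.of_nonneg_of_le (fun k => integral_nonneg fun x => norm_nonneg _) hbound hsum.abs
  calc ∫ x, W x ∂F = ∫ x, (∑' k : Fin d → ℤ, a k * tcos k x) ∂F := by
        congr 1; funext x; exact hW x
    _ = ∑' k : Fin d → ℤ, ∫ x, a k * tcos k x ∂F :=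
        (integral_tsum_of_summable_integral_norm hint hsum2).symm
    _ = ∑' k : Fin d → ℤ, a k * ∫ x, tcos k x ∂F := by
        congr 1; funext k; exact MeasureTheory.integral_const_mul _ _

end Core

section Core2
variable {d : ℕ}

lemma energy_eq_prod (W : Torus d → ℝ) (hWc : Continuous W) (ρ : Measure (Torus d))
    [IsProbabilityMeasure ρ] :
    energy W ρ = (1/2) * ∫ z : Torus d × Torus d, W (z.1 - z.2) ∂(ρ.prod ρ) := by
  rw [energy]
  congr 1
  exact integral_integral (integrable_of_cont _
    (hWc.comp (continuous_fst.sub continuous_snd)) _)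

lemma energy_eq_map (W : Torus d → ℝ) (hWc : Continuous W) (ρ : Measure (Torus d))
    [IsProbabilityMeasure ρ] :
    energy W ρ = (1/2) * ∫ x, W x ∂((ρ.prod ρ).map fun p => p.1 - p.2) := by
  rw [energy_eq_prod W hWc, integral_map (φ := fun p : Torus d × Torus d => p.1 - p.2)
    ((continuous_fst.sub continuous_snd).measurable).aemeasurable hWc.aestronglyMeasurable]

lemma integral_double (f g : Torus d → ℝ) (hf : Continuous f) (hg : Continuous g)
    (ρ : Measure (Torus d)) [IsProbabilityMeasure ρ] :
    ∫ z : Torus d × Torus d, (f z.1 * g z.2 - g z.1 * f z.2) ∂(ρ.prod ρ) =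
      (∫ x, f x ∂ρ) * (∫ x, g x ∂ρ) - (∫ x, g x ∂ρ) * (∫ x, f x ∂ρ) := by
  have hfi : Integrable f ρ := integrable_of_cont f hf ρ
  have hgi : Integrable g ρ := integrable_of_cont g hg ρ
  rw [integral_prod _ (integrable_of_cont _ (by fun_prop) _)]
  have inner : ∀ x : Torus d, ∫ y, (f x * g y - g x * f y) ∂ρ =
      f x * (∫ y, g y ∂ρ) - g x * (∫ y, f y ∂ρ) := by
    intro x
    rw [integral_sub (hgi.const_mul _) (hfi.const_mul _), integral_const_mul, integral_const_mul]
  simp_rw [inner]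
  rw [integral_sub (hfi.mul_const _) (hgi.mul_const _), integral_mul_const, integral_mul_const]

lemma integral_double' (f g : Torus d → ℝ) (hf : Continuous f) (hg : Continuous g)
    (ρ : Measure (Torus d)) [IsProbabilityMeasure ρ] :
    ∫ z : Torus d × Torus d, (f z.1 * f z.2 + g z.1 * g z.2) ∂(ρ.prod ρ) =
      (∫ x, f x ∂ρ) * (∫ x, f x ∂ρ) + (∫ x, g x ∂ρ) * (∫ x, g x ∂ρ) := by
  have hfi : Integrable f ρ := integrable_of_cont f hf ρ
  have hgi : Integrable g ρ := integrable_of_cont g hg ρ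
  rw [integral_prod _ (integrable_of_cont _ (by fun_prop) _)]
  have inner : ∀ x : Torus d, ∫ y, (f x * f y + g x * g y) ∂ρ =
      f x * (∫ y, f y ∂ρ) + g x * (∫ y, g y ∂ρ) := by
    intro x
    rw [integral_add (hfi.const_mul _) (hgi.const_mul _), integral_const_mul, integral_const_mul]
  simp_rw [inner]
  rw [integral_add (hfi.mul_const _) (hgi.mul_const _), integral_mul_const, integral_mul_const]

lemma cone_autocorr (ρ : Measure (Torus d)) [IsProbabilityMeasure ρ] :
    inCone ((ρ.prod ρ).map fun p => p.1 - p.2) := by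
  haveI : IsProbabilityMeasure ((ρ.prod ρ).map fun p : Torus d × Torus d => p.1 - p.2) :=
    Measure.isProbabilityMeasure_map ((continuous_fst.sub continuous_snd).measurable).aemeasurable
  refine ⟨measure_univ, fun k hk => ⟨?_, ?_⟩⟩
  · rw [integral_map (φ := fun p : Torus d × Torus d => p.1 - p.2) ((continuous_fst.sub continuous_snd).measurable).aemeasurable
      (continuous_tsin k).aestronglyMeasurable]
    simp_rw [tsin_sub]
    rw [integral_double _ _ (continuous_tsin k) (continuous_tcos k) ρ]
    ring
  · rw [integral_map (φ := fun p : Torus d × Torus d => p.1 - p.2) ((continuous_fst.sub continuous_snd).measurable).aemeasurable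
      (continuous_tcos k).aestronglyMeasurable]
    simp_rw [tcos_sub]
    rw [integral_double' _ _ (continuous_tcos k) (continuous_tsin k) ρ]
    exact add_nonneg (mul_self_nonneg _) (mul_self_nonneg _)

end Core2

/-- Proposition A.3: the relaxation (R) is sharp when the constant state or a Dirac mass is
the global minimizer.  (a) If `W` has nonnegative cosine coefficients then `(1/2) ∫ W dF ≥ 0`
on the relaxed cone `C`, the bound is attained by the Haar measure, and `E(Haar) = 0` is the
minimum energy.  (b) If `W(0) ≤ W(x)` for all `x` then `(1/2) ∫ W dF ≥ (1/2) W(0)` on `C`,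
the bound is attained by `δ₀`, and `E(δ₀) = W(0)/2` is the minimum energy. -/
theorem stmt16 {d : ℕ} (W : Torus d → ℝ) (hWc : Continuous W) (hWsymm : ∀ x, W (-x) = W x) :
    (∀ a : (Fin d → ℤ) → ℝ, (∀ k, a (-k) = a k) → (∀ k, k ≠ 0 → 0 ≤ a k) → a 0 = 0 →
        Summable a → (∀ x, W x = ∑' k : Fin d → ℤ, a k * tcos k x) →
        (∀ F : Measure (Torus d), inCone F → 0 ≤ (1/2) * ∫ x, W x ∂F) ∧
          inCone (volume : Measure (Torus d)) ∧
          (1/2) * (∫ x, W x ∂(volume : Measure (Torus d))) = 0 ∧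
          energy W (volume : Measure (Torus d)) = 0 ∧
          (∀ ρ : Measure (Torus d), IsProbabilityMeasure ρ →
            energy W (volume : Measure (Torus d)) ≤ energy W ρ)) ∧
      ((∀ x, W 0 ≤ W x) →
        (∀ F : Measure (Torus d), inCone F → (1/2) * W 0 ≤ (1/2) * ∫ x, W x ∂F) ∧
          inCone (Measure.dirac (0 : Torus d)) ∧
          (1/2) * (∫ x, W x ∂(Measure.dirac (0 : Torus d))) = (1/2) * W 0 ∧
          energy W (Measure.dirac (0 : Torus d)) = (1/2) * W 0 ∧
          (∀ ρ : Measure (Torus d), IsProbabilityMeasure ρ →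
            energy W (Measure.dirac (0 : Torus d)) ≤ energy W ρ)) := by
  constructor
  · intro a hsymm hpos ha0 hsum hW
    have hbound : ∀ F : Measure (Torus d), inCone F → 0 ≤ (1/2) * ∫ x, W x ∂F := by
      intro F hF
      obtain ⟨hF1, hFk⟩ := hF
      haveI : IsProbabilityMeasure F := ⟨hF1⟩
      rw [integral_expansion F a hsum W hW]
      have h1 : 0 ≤ ∑' k : Fin d → ℤ, a k * ∫ x, tcos k x ∂F := by
        apply tsum_nonneg
        intro k
        by_cases hk : k = 0
        · simp [hk, ha0]
        · exact mul_nonneg (hpos k hk) (hFk k hk).2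
      linarith
    have hconevol : inCone (volume : Measure (Torus d)) := by
      refine ⟨measure_univ, fun k hk => ⟨integral_tsin_volume k hk, ?_⟩⟩
      rw [integral_tcos_volume k hk]
    have hWvol : ∫ x, W x ∂(volume : Measure (Torus d)) = 0 := by
      rw [integral_expansion volume a hsum W hW]
      have h2 : ∀ k : Fin d → ℤ, a k * ∫ x, tcos k x ∂(volume : Measure (Torus d)) = 0 := by
        intro k; by_cases hk : k = 0
        · simp [hk, ha0]
        · rw [integral_tcos_volume k hk, mul_zero]
      calc ∑' k : Fin d → ℤ, a k * ∫ x, tcos k x ∂(volume : Measure (Torus d))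
          = ∑' _k : Fin d → ℤ, (0:ℝ) := tsum_congr h2
        _ = 0 := tsum_zero
    have henergyvol : energy W (volume : Measure (Torus d)) = 0 := by
      rw [energy]
      have inner : ∀ x : Torus d, ∫ y, W (x - y) ∂(volume : Measure (Torus d)) = 0 := by
        intro x
        have hx : ∀ y : Torus d, W (x - y) = W (y - x) := fun y => by
          rw [← hWsymm (y - x), neg_sub]
        simp_rw [hx]
        rw [integral_sub_right_eq_self W x]
        exact hWvol
      simp_rw [inner]
      simp
    refine ⟨hbound, hconevol, by rw [hWvol, mul_zero], henergyvol, ?_⟩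
    intro ρ hρ
    haveI := hρ
    rw [henergyvol, energy_eq_map W hWc ρ]
    exact hbound _ (cone_autocorr ρ)
  · intro h0
    have hbound : ∀ F : Measure (Torus d), inCone F → (1/2) * W 0 ≤ (1/2) * ∫ x, W x ∂F := by
      intro F hF
      haveI : IsProbabilityMeasure F := ⟨hF.1⟩
      have h1 : W 0 = ∫ _x, W 0 ∂F := by simp
      have h2 : ∫ _x, W 0 ∂F ≤ ∫ x, W x ∂F :=
        integral_mono (integrable_const _) (integrable_of_cont W hWc F) h0
      linarith
    have hdirac_cone : inCone (Measure.dirac (0 : Torus d)) := by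
      refine ⟨by simp, fun k hk => ⟨?_, ?_⟩⟩
      · rw [integral_dirac' _ _ (continuous_tsin k).stronglyMeasurable, tsin_zero_right]
      · rw [integral_dirac' _ _ (continuous_tcos k).stronglyMeasurable, tcos_zero_right]
        exact zero_le_one
    have hWdirac : ∫ x, W x ∂(Measure.dirac (0 : Torus d)) = W 0 :=
      integral_dirac' W 0 hWc.stronglyMeasurable
    have henergy : energy W (Measure.dirac (0 : Torus d)) = (1/2) * W 0 := by
      rw [energy]
      have inner : ∀ x : Torus d, ∫ y, W (x - y) ∂(Measure.dirac (0 : Torus d)) = W x := by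
        intro x
        rw [integral_dirac' (fun y => W (x - y)) 0
          ((hWc.comp ((continuous_const (y := x)).sub continuous_id)).stronglyMeasurable :
            StronglyMeasurable fun y : Torus d => W (x - y))]
        rw [sub_zero]
      simp_rw [inner]
      rw [hWdirac]
    refine ⟨hbound, hdirac_cone, by rw [hWdirac], henergy, ?_⟩
    intro ρ hρ
    haveI := hρ
    rw [henergy, energy_eq_prod W hWc ρ]
    have h1 : W 0 = ∫ _z : Torus d × Torus d, W 0 ∂(ρ.prod ρ) := by simp
    have h2 : ∫ _z : Torus d × Torus d, W 0 ∂(ρ.prod ρ) ≤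
        ∫ z : Torus d × Torus d, W (z.1 - z.2) ∂(ρ.prod ρ) :=
      integral_mono (integrable_const _)
        (integrable_of_cont _ (hWc.comp (continuous_fst.sub continuous_snd)) _)
        (fun z => h0 _)
    linarith
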